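/- There exists an infinite orthonormal sequence {φ_n}_{n ∈ ℤ} in L²(ℝ) and a finite constant c > 0 such that for every n: μ(φ_n) = 0, μ(φ̂_n) = 0, and Δ(φ_n)·Δ(φ̂_n) = c. (For instance, take a real-valued even C^∞ function φ with supp(φ) ⊂ [−2,−1] ∪ [1,2] and ‖φ‖₂ = 1, and set φ_n(x) = 2^{n/2} φ(2^n x).) -/

import Mathlib

open MeasureTheory Filter Real
open scoped ENNReal FourierTransform ComplexConjugate

noncomputable section

/-- The time mean `μ(f) = ∫ t |f t|² dt`. -/
def timeMean (f : ℝ → ℂ) : ℝ := ∫ t, t * ‖f t‖ ^ 2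

/-- The time dispersion `Δ(f) = (∫ (t - μ(f))² |f t|² dt)^(1/2)`, valued in `[0, ∞]`. -/
def timeDisp (f : ℝ → ℂ) : ℝ≥0∞ :=
  (∫⁻ t, ENNReal.ofReal ((t - timeMean f) ^ 2) * (‖f t‖₊ : ℝ≥0∞) ^ 2) ^ (1 / 2 : ℝ)

namespace DispAux

open scoped ContDiff

lemma ofReal_norm_eq_coe_nnnorm {E : Type*} [NormedAddCommGroup E] (x : E) :
    ENNReal.ofReal ‖x‖ = (‖x‖₊ : ℝ≥0∞) :=
  ENNReal.ofReal_eq_coe_nnreal (norm_nonneg x)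

/-! ### A smooth even bump supported away from the origin -/

def bmp : ContDiffBump (3/2 : ℝ) := ⟨1/4, 1/2, by norm_num, by norm_num⟩

def ψ₀ : ℝ → ℝ := fun x => bmp x + bmp (-x)

lemma ψ₀_nonneg (x : ℝ) : 0 ≤ ψ₀ x := add_nonneg bmp.nonneg bmp.nonneg

lemma ψ₀_even (x : ℝ) : ψ₀ (-x) = ψ₀ x := by simp [ψ₀, add_comm]

lemma ψ₀_smooth : ContDiff ℝ ∞ ψ₀ :=
  bmp.contDiff.add (bmp.contDiff.comp contDiff_neg)

lemma bmp_supp {x : ℝ} (h : bmp x ≠ 0) : 1 < x ∧ x < 2 := by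
  have hx : x ∈ Metric.ball (3/2 : ℝ) (1/2 : ℝ) := by
    have : x ∈ Function.support bmp := h
    rwa [bmp.support_eq] at this
  rw [Metric.mem_ball, Real.dist_eq] at hx
  have := abs_lt.1 hx
  constructor <;> [linarith [this.1]; linarith [this.2]]

lemma ψ₀_supp {x : ℝ} (h : ψ₀ x ≠ 0) : 1 < |x| ∧ |x| < 2 := by
  by_cases h1 : bmp x = 0
  · have h2 : bmp (-x) ≠ 0 := by
      intro h2; exact h (by simp [ψ₀, h1, h2])
    obtain ⟨ha, hb⟩ := bmp_supp h2
    rw [abs_of_neg (by linarith : x < 0)]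
    exact ⟨ha, hb⟩
  · obtain ⟨ha, hb⟩ := bmp_supp h1
    rw [abs_of_pos (by linarith : 0 < x)]
    exact ⟨ha, hb⟩

lemma ψ₀_compactSupport : HasCompactSupport ψ₀ := by
  apply HasCompactSupport.intro (isCompact_Icc (a := (-2:ℝ)) (b := (2:ℝ)))
  intro x hx
  by_contra h
  obtain ⟨h1, h2⟩ := ψ₀_supp h
  rcases abs_lt.1 h2 with ⟨hl, hr⟩
  exact hx ⟨by linarith, by linarith⟩

lemma ψ₀_continuous : Continuous ψ₀ := ψ₀_smooth.continuous

def Nc : ℝ := ∫ x, (ψ₀ x) ^ 2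

lemma ψ₀_sq_integrable : Integrable (fun x => (ψ₀ x) ^ 2) := by
  apply Continuous.integrable_of_hasCompactSupport (ψ₀_continuous.pow 2)
  exact ψ₀_compactSupport.mono (fun x hx => by
    simp only [Function.mem_support] at hx ⊢
    intro h0
    exact hx (by simp [h0]))

lemma Nc_pos : 0 < Nc := by
  have hsub : ∀ x ∈ Set.Icc (5/4 : ℝ) (7/4 : ℝ), (1:ℝ) ≤ (ψ₀ x) ^ 2 := by
    intro x hx
    have h1 : bmp x = 1 := by
      apply bmp.one_of_mem_closedBall
      rw [Metric.mem_closedBall, Real.dist_eq, abs_le]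
      have hrIn : bmp.rIn = 1/4 := rfl
      rw [hrIn]
      constructor <;> [linarith [hx.1]; linarith [hx.2]]
    have h2 : (0:ℝ) ≤ bmp (-x) := bmp.nonneg
    have : (1:ℝ) ≤ ψ₀ x := by
      show (1:ℝ) ≤ bmp x + bmp (-x)
      rw [h1]; linarith
    nlinarith
  have h1 : ∫ x in Set.Icc (5/4 : ℝ) (7/4 : ℝ), (1:ℝ) ≤
      ∫ x in Set.Icc (5/4 : ℝ) (7/4 : ℝ), (ψ₀ x) ^ 2 := by
    apply setIntegral_mono_on (integrableOn_const (by simp [Real.volume_Icc]))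
      ψ₀_sq_integrable.integrableOn measurableSet_Icc hsub
  have h2 : ∫ x in Set.Icc (5/4 : ℝ) (7/4 : ℝ), (ψ₀ x) ^ 2 ≤ Nc := by
    apply setIntegral_le_integral ψ₀_sq_integrable
    filter_upwards with x using by positivity
  have h3 : ∫ x in Set.Icc (5/4 : ℝ) (7/4 : ℝ), (1:ℝ) = 1/2 := by
    simp [Real.volume_Icc]
    norm_num
  linarith

/-! ### The normalized function `Ψ` -/

def Ψ : ℝ → ℂ := fun x => ((ψ₀ x / Real.sqrt Nc : ℝ) : ℂ)

lemma Ψ_even (x : ℝ) : Ψ (-x) = Ψ x := by simp [Ψ, ψ₀_even]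

lemma Ψ_norm_even (x : ℝ) : ‖Ψ (-x)‖ = ‖Ψ x‖ := by rw [Ψ_even]

lemma Ψ_smooth : ContDiff ℝ ∞ Ψ :=
  Complex.ofRealCLM.contDiff.comp (ψ₀_smooth.div_const _)

lemma Ψ_continuous : Continuous Ψ := Ψ_smooth.continuous

lemma Ψ_compactSupport : HasCompactSupport Ψ :=
  ψ₀_compactSupport.comp_left (g := fun r : ℝ => ((r / Real.sqrt Nc : ℝ) : ℂ)) (by simp)

lemma Ψ_supp {x : ℝ} (h : Ψ x ≠ 0) : 1 < |x| ∧ |x| < 2 := by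
  apply ψ₀_supp
  intro h0
  exact h (by simp [Ψ, h0])

lemma Ψ_norm_sq (x : ℝ) : ‖Ψ x‖ ^ 2 = (ψ₀ x) ^ 2 / Nc := by
  rw [Ψ, Complex.norm_real, Real.norm_eq_abs, sq_abs, div_pow, Real.sq_sqrt Nc_pos.le]

lemma Ψ_normsq_integrable : Integrable (fun x => ‖Ψ x‖ ^ 2) := by
  simp_rw [Ψ_norm_sq]
  exact ψ₀_sq_integrable.div_const _

lemma Ψ_int_sq : ∫ x, ‖Ψ x‖ ^ 2 = 1 := by
  simp_rw [Ψ_norm_sq]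
  rw [integral_div]
  exact div_self Nc_pos.ne'

lemma Ψ_integrable : Integrable Ψ :=
  Ψ_continuous.integrable_of_hasCompactSupport Ψ_compactSupport

/-! ### Dilations -/

def a (n : ℤ) : ℝ := (2:ℝ) ^ n

lemma a_pos (n : ℤ) : 0 < a n := zpow_pos (by norm_num) n

lemma a_neg (n : ℤ) : a (-n) = (a n)⁻¹ := zpow_neg 2 n

def D (n : ℤ) (g : ℝ → ℂ) : ℝ → ℂ := fun x => (Real.sqrt (a n) : ℂ) * g (a n * x)

lemma fourier_comp_mul (g : ℝ → ℂ) {c : ℝ} (hc : 0 < c) (ξ : ℝ) :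
    𝓕 (fun x => g (c * x)) ξ = ((c⁻¹ : ℝ) : ℂ) * 𝓕 g (c⁻¹ * ξ) := by
  rw [Real.fourier_real_eq]
  have key : ∀ x : ℝ, 𝐞 (-(x * ξ)) • g (c * x)
      = (fun y => 𝐞 (-(y * (c⁻¹ * ξ))) • g y) (c * x) := by
    intro x
    simp only []
    congr 2
    field_simp
  calc (∫ x : ℝ, 𝐞 (-(x * ξ)) • g (c * x))
      = ∫ x : ℝ, (fun y => 𝐞 (-(y * (c⁻¹ * ξ))) • g y) (c * x) := by simp_rw [key]
    _ = |c⁻¹| • ∫ y : ℝ, 𝐞 (-(y * (c⁻¹ * ξ))) • g y := by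
        exact MeasureTheory.Measure.integral_comp_mul_left
          (fun y => 𝐞 (-(y * (c⁻¹ * ξ))) • g y) c
    _ = ((c⁻¹ : ℝ) : ℂ) * 𝓕 g (c⁻¹ * ξ) := by
        rw [← Real.fourier_real_eq, abs_of_pos (inv_pos.2 hc), Complex.real_smul]

lemma sqrt_mul_inv (n : ℤ) : Real.sqrt (a n) * (a n)⁻¹ = Real.sqrt ((a n)⁻¹) := by
  have hs : 0 < Real.sqrt (a n) := Real.sqrt_pos.2 (a_pos n)
  have h2 : Real.sqrt (a n) * Real.sqrt (a n) = a n := Real.mul_self_sqrt (a_pos n).le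
  rw [Real.sqrt_inv]
  field_simp
  rw [Real.sq_sqrt (a_pos n).le, div_self (a_pos n).ne']

lemma fourier_D (g : ℝ → ℂ) (n : ℤ) : 𝓕 (D n g) = D (-n) (𝓕 g) := by
  funext ξ
  have h1 : 𝓕 (D n g) ξ = (Real.sqrt (a n) : ℂ) * 𝓕 (fun x => g (a n * x)) ξ := by
    rw [Real.fourier_real_eq, Real.fourier_real_eq, ← integral_const_mul]
    congr 1 with v
    simp only [D, Circle.smul_def, smul_eq_mul]
    ring
  rw [h1, fourier_comp_mul g (a_pos n) ξ]
  show _ = (Real.sqrt (a (-n)) : ℂ) * 𝓕 g (a (-n) * ξ)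
  rw [a_neg, ← mul_assoc, ← Complex.ofReal_mul, sqrt_mul_inv]

lemma D_norm_even {g : ℝ → ℂ} (hg : ∀ x, ‖g (-x)‖ = ‖g x‖) (n : ℤ) (x : ℝ) :
    ‖D n g (-x)‖ = ‖D n g x‖ := by
  have : a n * -x = -(a n * x) := by ring
  simp only [D, norm_mul, this, hg]

lemma fourier_even {g : ℝ → ℂ} (hg : ∀ x, g (-x) = g x) (ξ : ℝ) :
    𝓕 g (-ξ) = 𝓕 g ξ := by
  rw [← Real.fourierInv_eq_fourier_neg,
    Real.fourierInv_eq_fourier_comp_neg]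
  simp_rw [hg]

lemma timeMean_eq_zero {f : ℝ → ℂ} (hf : ∀ x, ‖f (-x)‖ = ‖f x‖) : timeMean f = 0 := by
  have h1 : (∫ t, t * ‖f t‖ ^ 2) = ∫ t, (-t) * ‖f (-t)‖ ^ 2 := by
    rw [← integral_neg_eq_self (fun t : ℝ => t * ‖f t‖ ^ 2) volume]
  have h2 : (∫ t, (-t) * ‖f (-t)‖ ^ 2) = - ∫ t, t * ‖f t‖ ^ 2 := by
    rw [← integral_neg]
    congr 1 with t
    rw [hf t]
    ring
  have : (∫ t, t * ‖f t‖ ^ 2) = 0 := by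
    have := h1.trans h2
    linarith
  rw [timeMean, this]

/-! ### The second-moment functional `L` -/

def L (g : ℝ → ℂ) : ℝ≥0∞ := ∫⁻ t, ENNReal.ofReal (t ^ 2) * (‖g t‖₊ : ℝ≥0∞) ^ 2

lemma timeDisp_eq {g : ℝ → ℂ} (h : timeMean g = 0) : timeDisp g = (L g) ^ (1/2 : ℝ) := by
  rw [timeDisp, h]
  simp only [sub_zero]
  rfl

lemma L_eq_ofReal (g : ℝ → ℂ) :
    L g = ∫⁻ t, ENNReal.ofReal (t ^ 2 * ‖g t‖ ^ 2) := by
  unfold L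
  congr 1 with t
  rw [ENNReal.ofReal_mul (by positivity), ← ofReal_norm_eq_coe_nnnorm,
    ← ENNReal.ofReal_pow (norm_nonneg _)]

lemma L_ne_top_of_integrable {f : ℝ → ℂ}
    (h : Integrable (fun t => t ^ 2 * ‖f t‖ ^ 2)) : L f ≠ ⊤ := by
  rw [L_eq_ofReal]
  have hb : ∀ t : ℝ, ENNReal.ofReal (t ^ 2 * ‖f t‖ ^ 2) ≤ (‖t ^ 2 * ‖f t‖ ^ 2‖₊ : ℝ≥0∞) := by
    intro t
    rw [← ofReal_norm_eq_coe_nnnorm]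
    exact ENNReal.ofReal_le_ofReal (le_abs_self _)
  exact (lt_of_le_of_lt (lintegral_mono hb) h.2).ne

lemma L_D {g : ℝ → ℂ} (hg : Continuous g) (n : ℤ) :
    L (D n g) = ENNReal.ofReal (((a n)⁻¹) ^ 2) * L g := by
  set c := a n with hc
  have hc0 : 0 < c := a_pos n
  set F : ℝ → ℝ≥0∞ := fun u =>
    ENNReal.ofReal ((c⁻¹ * u) ^ 2) * ENNReal.ofReal c * (‖g u‖₊ : ℝ≥0∞) ^ 2 with hF
  have hq : Measurable fun u : ℝ => ENNReal.ofReal ((c⁻¹ * u) ^ 2) := by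
    exact ENNReal.measurable_ofReal.comp ((measurable_const_mul c⁻¹).pow_const 2)
  have hFmeas : Measurable F := by
    apply Measurable.mul (hq.mul_const _)
    exact ((hg.measurable.nnnorm).coe_nnreal_ennreal).pow_const 2
  have step1 : L (D n g) = ∫⁻ t, F (c * t) := by
    unfold L
    congr 1 with t
    rw [hF]
    simp only []
    have e1 : c⁻¹ * (c * t) = t := by field_simp
    rw [e1]
    have e2 : ((‖D n g t‖₊ : ℝ≥0∞)) ^ 2 = ENNReal.ofReal c * (‖g (c * t)‖₊ : ℝ≥0∞) ^ 2 := by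
      show ((‖(Real.sqrt (a n) : ℂ) * g (a n * t)‖₊ : ℝ≥0∞)) ^ 2 = _
      rw [nnnorm_mul, ENNReal.coe_mul, mul_pow]
      congr 1
      rw [← ofReal_norm_eq_coe_nnnorm, Complex.norm_real, Real.norm_eq_abs,
        abs_of_nonneg (Real.sqrt_nonneg _), ← ENNReal.ofReal_pow (Real.sqrt_nonneg _),
        Real.sq_sqrt hc0.le]
    rw [e2]
    ring
  have step2 : (∫⁻ t, F (c * t)) = ENNReal.ofReal |c⁻¹| * ∫⁻ u, F u := by
    rw [← lintegral_map hFmeas (measurable_const_mul c),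
      Real.map_volume_mul_left hc0.ne', lintegral_smul_measure, smul_eq_mul]
  have step3 : (∫⁻ u, F u) = ENNReal.ofReal ((c⁻¹) ^ 2) * ENNReal.ofReal c * L g := by
    rw [hF]
    have e : ∀ u : ℝ, ENNReal.ofReal ((c⁻¹ * u) ^ 2) * ENNReal.ofReal c * (‖g u‖₊ : ℝ≥0∞) ^ 2
        = (ENNReal.ofReal ((c⁻¹) ^ 2) * ENNReal.ofReal c) *
          (ENNReal.ofReal (u ^ 2) * (‖g u‖₊ : ℝ≥0∞) ^ 2) := by
      intro u
      rw [mul_pow, ENNReal.ofReal_mul (by positivity)]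
      ring
    simp_rw [e]
    have hm1 : Measurable fun u : ℝ => ENNReal.ofReal (u ^ 2) := by
      exact ENNReal.measurable_ofReal.comp (measurable_id.pow_const 2)
    rw [lintegral_const_mul _ (f := fun u => ENNReal.ofReal (u ^ 2) * (‖g u‖₊ : ℝ≥0∞) ^ 2) (hm1.mul
      (((hg.measurable.nnnorm).coe_nnreal_ennreal).pow_const 2))]
    rfl
  rw [step1, step2, step3]
  rw [abs_of_pos (inv_pos.2 hc0)]
  rw [← mul_assoc, ← mul_assoc, ← ENNReal.ofReal_mul (by positivity),
    ← ENNReal.ofReal_mul (by positivity)]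
  congr 2
  field_simp

lemma timeDisp_D {g : ℝ → ℂ} (hg : Continuous g) (n : ℤ)
    (hmean : timeMean (D n g) = 0) :
    timeDisp (D n g) = ENNReal.ofReal ((a n)⁻¹) * (L g) ^ (1/2 : ℝ) := by
  rw [timeDisp_eq hmean, L_D hg n, ENNReal.mul_rpow_of_nonneg _ _ (by norm_num)]
  congr 1
  rw [ENNReal.ofReal_rpow_of_pos (pow_pos (inv_pos.2 (a_pos n)) 2)]
  congr 1
  rw [← Real.sqrt_eq_rpow, Real.sqrt_sq (inv_nonneg.2 (a_pos n).le)]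

/-! ### Decay of the Fourier transform of a smooth compactly supported function -/

lemma hcs_iteratedDeriv {f : ℝ → ℂ} (hs : HasCompactSupport f) (k : ℕ) :
    HasCompactSupport (iteratedDeriv k f) := by
  induction k with
  | zero => simpa [iteratedDeriv_zero] using hs
  | succ k ih => rw [iteratedDeriv_succ]; exact ih.deriv

lemma fourier_decay {f : ℝ → ℂ} (hf : ContDiff ℝ ∞ f) (hs : HasCompactSupport f) (k : ℕ) :
    ∃ C : ℝ, 0 ≤ C ∧ ∀ ξ : ℝ, |ξ| ^ k * ‖𝓕 f ξ‖ ≤ C := by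
  have hint : ∀ m : ℕ, (m : ℕ∞) ≤ (⊤ : ℕ∞) → Integrable (iteratedDeriv m f) := by
    intro m _
    exact (hf.continuous_iteratedDeriv m (by exact_mod_cast le_top)).integrable_of_hasCompactSupport
      (hcs_iteratedDeriv hs m)
  have key := Real.fourier_iteratedDeriv (N := (⊤ : ℕ∞)) (n := k) hf hint le_top
  refine ⟨∫ x, ‖iteratedDeriv k f x‖, integral_nonneg (fun x => norm_nonneg _), fun ξ => ?_⟩
  have hb : ‖𝓕 (iteratedDeriv k f) ξ‖ ≤ ∫ x, ‖iteratedDeriv k f x‖ :=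
    VectorFourier.norm_fourierIntegral_le_integral_norm _ _ _ _ _
  rw [key] at hb
  have hnorm : ‖(2 * ↑π * Complex.I * (ξ:ℂ)) ^ k • 𝓕 f ξ‖
      = (2 * π * |ξ|) ^ k * ‖𝓕 f ξ‖ := by
    rw [norm_smul, norm_pow]
    congr 2
    simp only [norm_mul, Complex.norm_two, Complex.norm_real, Complex.norm_I, Real.norm_eq_abs,
      abs_of_pos Real.pi_pos]
    ring
  rw [hnorm] at hb
  refine le_trans ?_ hb
  apply mul_le_mul_of_nonneg_right _ (norm_nonneg _)
  apply pow_le_pow_left₀ (abs_nonneg _)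
  nlinarith [abs_nonneg ξ, Real.pi_gt_three]

lemma inv_one_add_sq_integrable (C : ℝ) :
    Integrable (fun t : ℝ => C * (1 + t ^ 2)⁻¹) :=
  integrable_inv_one_add_sq.const_mul C

lemma bound_via_decay {h : ℝ → ℝ} (C : ℝ) (hmeas : AEStronglyMeasurable h volume)
    (hb : ∀ t : ℝ, |h t| * (1 + t ^ 2) ≤ C) : Integrable h := by
  apply Integrable.mono' (inv_one_add_sq_integrable C) hmeas
  filter_upwards with t
  rw [Real.norm_eq_abs]
  have h1 : (0:ℝ) < 1 + t ^ 2 := by positivity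
  have h2 := hb t
  calc |h t| = |h t| * (1 + t ^ 2) * (1 + t ^ 2)⁻¹ := by field_simp
    _ ≤ C * (1 + t ^ 2)⁻¹ := mul_le_mul_of_nonneg_right h2 (inv_nonneg.2 h1.le)

lemma fourier_decay_integrable {f : ℝ → ℂ} (hf : ContDiff ℝ ∞ f)
    (hs : HasCompactSupport f) :
    Integrable (𝓕 f) ∧ Integrable (fun t => t * ‖𝓕 f t‖ ^ 2) ∧
      Integrable (fun t => t ^ 2 * ‖𝓕 f t‖ ^ 2) := by
  obtain ⟨C0, hC0, h0⟩ := fourier_decay hf hs 0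
  obtain ⟨C1, hC1, h1⟩ := fourier_decay hf hs 1
  obtain ⟨C2, hC2, h2⟩ := fourier_decay hf hs 2
  obtain ⟨C3, hC3, h3⟩ := fourier_decay hf hs 3
  have hcont : Continuous (𝓕 f) := by
    apply VectorFourier.fourierIntegral_continuous Real.continuous_fourierChar
      (by exact continuous_inner)
    exact hf.continuous.integrable_of_hasCompactSupport hs
  have hnn : ∀ ξ : ℝ, 0 ≤ ‖𝓕 f ξ‖ := fun ξ => norm_nonneg _
  constructor
  · have : Integrable (fun t : ℝ => ‖𝓕 f t‖) := by
      apply bound_via_decay (C0 + C2) hcont.norm.aestronglyMeasurable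
      intro t
      have e0 := h0 t
      have e2 := h2 t
      simp only [pow_zero, one_mul] at e0
      have : |‖𝓕 f t‖| = ‖𝓕 f t‖ := abs_of_nonneg (hnn t)
      rw [this]
      have ht2 : |t| ^ 2 = t ^ 2 := sq_abs t
      nlinarith
    exact (integrable_norm_iff hcont.aestronglyMeasurable).1 this
  constructor
  · apply bound_via_decay (C1 * C0 + C3 * C0)
      (by exact (continuous_id.mul (hcont.norm.pow 2)).aestronglyMeasurable)
    intro t
    have e0 := h0 t
    have e1 := h1 t
    have e3 := h3 t
    simp only [pow_zero, one_mul, pow_one] at e0 e1 e3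
    have habs : |t * ‖𝓕 f t‖ ^ 2| = |t| * ‖𝓕 f t‖ ^ 2 := by
      rw [abs_mul, abs_of_nonneg (by positivity : (0:ℝ) ≤ ‖𝓕 f t‖ ^ 2)]
    rw [habs]
    have ht2 : t ^ 2 = |t| ^ 2 := (sq_abs t).symm
    rw [ht2]
    have p1 : (|t| * ‖𝓕 f t‖) * ‖𝓕 f t‖ ≤ C1 * C0 :=
      mul_le_mul e1 e0 (norm_nonneg _) hC1
    have p2 : (|t| ^ 3 * ‖𝓕 f t‖) * ‖𝓕 f t‖ ≤ C3 * C0 :=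
      mul_le_mul e3 e0 (norm_nonneg _) hC3
    nlinarith [p1, p2]
  · apply bound_via_decay (C1 * C1 + C3 * C1)
      (by exact ((continuous_pow 2).mul (hcont.norm.pow 2)).aestronglyMeasurable)
    intro t
    have e1 := h1 t
    have e3 := h3 t
    simp only [pow_one] at e1
    have habs : |t ^ 2 * ‖𝓕 f t‖ ^ 2| = t ^ 2 * ‖𝓕 f t‖ ^ 2 := by
      rw [abs_of_nonneg (by positivity)]
    rw [habs]
    have ht2 : t ^ 2 = |t| ^ 2 := (sq_abs t).symm
    rw [ht2]
    have p1 : (|t| * ‖𝓕 f t‖) * (|t| * ‖𝓕 f t‖) ≤ C1 * C1 :=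
      mul_le_mul e1 e1 (by positivity) hC1
    have p2 : (|t| ^ 3 * ‖𝓕 f t‖) * (|t| * ‖𝓕 f t‖) ≤ C3 * C1 :=
      mul_le_mul e3 e1 (by positivity) hC3
    nlinarith [p1, p2]

/-! ### The sequence `φ` -/

def φf : ℤ → ℝ → ℂ := fun n => D n Ψ

lemma φ_smooth (n : ℤ) : ContDiff ℝ ∞ (φf n) := by
  apply ContDiff.mul contDiff_const
  exact Ψ_smooth.comp (contDiff_const.mul contDiff_id)

lemma φ_continuous (n : ℤ) : Continuous (φf n) := (φ_smooth n).continuous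

lemma φ_hcs (n : ℤ) : HasCompactSupport (φf n) := by
  have h1 : HasCompactSupport (fun x : ℝ => Ψ (a n * x)) := by
    have := Ψ_compactSupport.comp_homeomorph (Homeomorph.mulLeft₀ (a n) (a_pos n).ne')
    exact this
  exact h1.mono (by
    intro x hx
    simp only [Function.mem_support, φf, D] at hx ⊢
    intro h0
    exact hx (by rw [h0, mul_zero]))

lemma φ_norm_even (n : ℤ) (x : ℝ) : ‖φf n (-x)‖ = ‖φf n x‖ :=
  D_norm_even Ψ_norm_even n x

lemma φ_supp {n : ℤ} {t : ℝ} (h : φf n t ≠ 0) : 1 < a n * |t| ∧ a n * |t| < 2 := by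
  have hΨ : Ψ (a n * t) ≠ 0 := by
    intro h0
    exact h (by simp [φf, D, h0])
  have := Ψ_supp hΨ
  rwa [abs_mul, abs_of_pos (a_pos n)] at this

lemma φ_orth {n m : ℤ} (hnm : n ≠ m) (t : ℝ) : conj (φf n t) * φf m t = 0 := by
  by_contra h
  have hn : φf n t ≠ 0 := by
    intro h0; exact h (by simp [h0])
  have hm : φf m t ≠ 0 := by
    intro h0; exact h (by simp [h0])
  obtain ⟨h1n, h2n⟩ := φ_supp hn
  obtain ⟨h1m, h2m⟩ := φ_supp hm
  have ht : 0 < |t| := by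
    rcases lt_or_ge 0 |t| with h | h
    · exact h
    · exfalso
      have : |t| = 0 := le_antisymm h (abs_nonneg t)
      rw [this, mul_zero] at h1n
      linarith
  have key : ∀ p q : ℤ, 1 < a p * |t| → a q * |t| < 2 → q ≤ p + 1 := by
    intro p q hp hq
    have ha : a q < a (p + 1) := by
      have : a (p + 1) = 2 * a p := by
        rw [a, a, zpow_add_one₀ (by norm_num : (2:ℝ) ≠ 0)]
        ring
      rw [this]
      by_contra hcon
      push_neg at hcon
      nlinarith [a_pos p, a_pos q]
    have := (zpow_lt_zpow_iff_right₀ (by norm_num : (1:ℝ) < 2)).1 ha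
    omega
  -- sharpen: strict inequality gives q < p + 1 i.e. q ≤ p
  have key' : ∀ p q : ℤ, 1 < a p * |t| → a q * |t| < 2 → q ≤ p := by
    intro p q hp hq
    have ha : a q < a (p + 1) := by
      have h2 : a (p + 1) = 2 * a p := by
        rw [a, a, zpow_add_one₀ (by norm_num : (2:ℝ) ≠ 0)]
        ring
      rw [h2]
      by_contra hcon
      push_neg at hcon
      nlinarith [a_pos p, a_pos q]
    have := (zpow_lt_zpow_iff_right₀ (by norm_num : (1:ℝ) < 2)).1 ha
    omega
  exact hnm (le_antisymm (key' m n h1m h2n) (key' n m h1n h2m))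

lemma φ_norm_one (n : ℤ) : (∫ t, conj (φf n t) * φf n t) = 1 := by
  have h1 : ∀ t : ℝ, conj (φf n t) * φf n t
      = (((Real.sqrt (a n) * (ψ₀ (a n * t) / Real.sqrt Nc)) ^ 2 : ℝ) : ℂ) := by
    intro t
    simp only [φf, D, Ψ]
    rw [← Complex.ofReal_mul, Complex.conj_ofReal, ← Complex.ofReal_mul]
    congr 1
    ring
  simp_rw [h1]
  have hcast : (∫ t, (((Real.sqrt (a n) * (ψ₀ (a n * t) / Real.sqrt Nc)) ^ 2 : ℝ) : ℂ))
      = ((∫ t, (Real.sqrt (a n) * (ψ₀ (a n * t) / Real.sqrt Nc)) ^ 2 : ℝ) : ℂ) :=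
    integral_ofReal
  rw [hcast]
  have h2 : (∫ t, (Real.sqrt (a n) * (ψ₀ (a n * t) / Real.sqrt Nc)) ^ 2) = 1 := by
    have e : ∀ t : ℝ, (Real.sqrt (a n) * (ψ₀ (a n * t) / Real.sqrt Nc)) ^ 2
        = a n * ((fun u => (ψ₀ u) ^ 2 / Nc) (a n * t)) := by
      intro t
      rw [mul_pow, div_pow, Real.sq_sqrt (a_pos n).le, Real.sq_sqrt Nc_pos.le]
    have h3 : (∫ t, (Real.sqrt (a n) * (ψ₀ (a n * t) / Real.sqrt Nc)) ^ 2)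
        = ∫ t, a n * ((fun u => (ψ₀ u) ^ 2 / Nc) (a n * t)) := by
      congr 1 with t
      exact e t
    rw [h3, integral_const_mul, MeasureTheory.Measure.integral_comp_mul_left
      (fun u => (ψ₀ u) ^ 2 / Nc) (a n)]
    rw [integral_div]
    show a n * (|( a n)⁻¹| • (Nc / Nc)) = 1
    rw [div_self Nc_pos.ne', abs_of_pos (inv_pos.2 (a_pos n)), smul_eq_mul]
    field_simp
    exact div_self (a_pos n).ne'
  rw [h2]
  norm_num

lemma φ_integrable (n : ℤ) : Integrable (φf n) :=
  (φ_continuous n).integrable_of_hasCompactSupport (φ_hcs n)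

lemma φ_memℒp (n : ℤ) : MemLp (φf n) 2 (volume : Measure ℝ) :=
  (φ_continuous n).memLp_of_hasCompactSupport (φ_hcs n)

lemma φ_time_integrable (n : ℤ) : Integrable (fun t => t * ‖φf n t‖ ^ 2) := by
  apply Continuous.integrable_of_hasCompactSupport
  · exact continuous_id.mul (((φ_continuous n).norm).pow 2)
  · apply (φ_hcs n).mono
    intro x hx
    simp only [Function.mem_support] at hx ⊢
    intro h0
    exact hx (by rw [h0]; simp)

lemma φ_sq_time_integrable (n : ℤ) : Integrable (fun t => t ^ 2 * ‖φf n t‖ ^ 2) := by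
  apply Continuous.integrable_of_hasCompactSupport
  · exact (continuous_pow 2).mul (((φ_continuous n).norm).pow 2)
  · apply (φ_hcs n).mono
    intro x hx
    simp only [Function.mem_support] at hx ⊢
    intro h0
    exact hx (by rw [h0]; simp)

lemma fourierΨ_continuous : Continuous (𝓕 Ψ) := by
  apply VectorFourier.fourierIntegral_continuous Real.continuous_fourierChar
    (by exact continuous_inner)
  exact Ψ_integrable

lemma fourierΨ_norm_even (x : ℝ) : ‖𝓕 Ψ (-x)‖ = ‖𝓕 Ψ x‖ := by
  rw [fourier_even Ψ_even]

lemma fourierφ_eq (n : ℤ) : 𝓕 (φf n) = D (-n) (𝓕 Ψ) := fourier_D Ψ n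

lemma φ_timeMean (n : ℤ) : timeMean (φf n) = 0 :=
  timeMean_eq_zero (φ_norm_even n)

lemma fourierφ_timeMean (n : ℤ) : timeMean (𝓕 (φf n)) = 0 := by
  rw [fourierφ_eq]
  exact timeMean_eq_zero (D_norm_even fourierΨ_norm_even (-n))

/-! ### `L` positivity and finiteness -/

lemma L_Ψ_ge_one : 1 ≤ L Ψ := by
  have h1 : (1 : ℝ≥0∞) = ∫⁻ t, ENNReal.ofReal (‖Ψ t‖ ^ 2) := by
    rw [← MeasureTheory.ofReal_integral_eq_lintegral_ofReal Ψ_normsq_integrable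
      (Filter.Eventually.of_forall (fun t => by positivity))]
    rw [Ψ_int_sq, ENNReal.ofReal_one]
  rw [h1]
  apply lintegral_mono
  intro t
  by_cases h : Ψ t = 0
  · simp [h]
  · have := (Ψ_supp h).1
    have ht2 : (1:ℝ) ≤ t ^ 2 := by
      nlinarith [sq_abs t, abs_nonneg t]
    calc ENNReal.ofReal (‖Ψ t‖ ^ 2) = 1 * ENNReal.ofReal (‖Ψ t‖ ^ 2) := (one_mul _).symm
      _ ≤ ENNReal.ofReal (t ^ 2) * ENNReal.ofReal (‖Ψ t‖ ^ 2) := by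
          apply mul_le_mul_left
          rw [← ENNReal.ofReal_one]
          exact ENNReal.ofReal_le_ofReal ht2
      _ = ENNReal.ofReal (t ^ 2) * (‖Ψ t‖₊ : ℝ≥0∞) ^ 2 := by
          congr 1
          rw [← ofReal_norm_eq_coe_nnnorm, ← ENNReal.ofReal_pow (norm_nonneg _)]

lemma L_Ψ_ne_top : L Ψ ≠ ⊤ := by
  apply L_ne_top_of_integrable
  apply Continuous.integrable_of_hasCompactSupport
  · exact (continuous_pow 2).mul ((Ψ_continuous.norm).pow 2)
  · apply Ψ_compactSupport.mono
    intro x hx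
    simp only [Function.mem_support] at hx ⊢
    intro h0
    exact hx (by rw [h0]; simp)

lemma fourierΨ_integrables :
    Integrable (𝓕 Ψ) ∧ Integrable (fun t => t * ‖𝓕 Ψ t‖ ^ 2) ∧
      Integrable (fun t => t ^ 2 * ‖𝓕 Ψ t‖ ^ 2) :=
  fourier_decay_integrable Ψ_smooth Ψ_compactSupport

lemma L_fourierΨ_ne_top : L (𝓕 Ψ) ≠ ⊤ :=
  L_ne_top_of_integrable fourierΨ_integrables.2.2

lemma L_fourierΨ_ne_zero : L (𝓕 Ψ) ≠ 0 := by
  intro h0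
  have hmeas : Measurable fun t : ℝ =>
      ENNReal.ofReal (t ^ 2) * (‖𝓕 Ψ t‖₊ : ℝ≥0∞) ^ 2 := by
    apply Measurable.mul (f := fun t : ℝ => ENNReal.ofReal (t ^ 2))
      (g := fun t => (‖𝓕 Ψ t‖₊ : ℝ≥0∞) ^ 2)
    · exact ENNReal.measurable_ofReal.comp (by fun_prop)
    · exact ((fourierΨ_continuous.measurable.nnnorm).coe_nnreal_ennreal).pow_const 2
  have hae := (lintegral_eq_zero_iff hmeas).1 h0
  have hzero : 𝓕 Ψ =ᵐ[volume] (fun _ => (0:ℂ)) := by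
    have hne : ∀ᵐ t : ℝ ∂volume, t ≠ 0 := by
      rw [ae_iff]
      have : {t : ℝ | ¬ t ≠ 0} = {(0:ℝ)} := by
        ext t; simp
      rw [this]
      exact measure_singleton 0
    filter_upwards [hae, hne] with t h1 h2
    simp only [Pi.zero_apply] at h1
    rcases mul_eq_zero.1 h1 with h | h
    · exfalso
      rw [ENNReal.ofReal_eq_zero] at h
      nlinarith [sq_abs t, abs_pos.2 h2]
    · have : (‖𝓕 Ψ t‖₊ : ℝ≥0∞) = 0 := by
        exact pow_eq_zero_iff (by norm_num) |>.1 h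
      simpa using this
  have heq : 𝓕 Ψ = (fun _ => (0:ℂ)) :=
    (Continuous.ae_eq_iff_eq (μ := volume) fourierΨ_continuous continuous_const).1 hzero
  have hinv : 𝓕⁻ (𝓕 Ψ) = Ψ :=
    Ψ_continuous.fourierInv_fourier_eq Ψ_integrable fourierΨ_integrables.1
  have hΨ0 : Ψ = (fun _ => (0:ℂ)) := by
    rw [← hinv, heq]
    funext v
    simp [Real.fourierInv_eq]
  have := Ψ_int_sq
  rw [hΨ0] at this
  simp at this

/-! ### Dispersion product -/

def cLΨ : ℝ≥0∞ := (L Ψ) ^ (1/2 : ℝ) * (L (𝓕 Ψ)) ^ (1/2 : ℝ)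

lemma timeDisp_φ (n : ℤ) :
    timeDisp (φf n) = ENNReal.ofReal ((a n)⁻¹) * (L Ψ) ^ (1/2 : ℝ) :=
  timeDisp_D Ψ_continuous n (φ_timeMean n)

lemma timeDisp_fourierφ (n : ℤ) :
    timeDisp (𝓕 (φf n)) = ENNReal.ofReal (a n) * (L (𝓕 Ψ)) ^ (1/2 : ℝ) := by
  have h := timeDisp_D fourierΨ_continuous (-n) (by
    rw [← fourierφ_eq]; exact fourierφ_timeMean n)
  rw [fourierφ_eq, h, a_neg, inv_inv]

lemma disp_product (n : ℤ) : timeDisp (φf n) * timeDisp (𝓕 (φf n)) = cLΨ := by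
  rw [timeDisp_φ, timeDisp_fourierφ, cLΨ]
  rw [mul_mul_mul_comm, ← ENNReal.ofReal_mul (inv_nonneg.2 (a_pos n).le),
    inv_mul_cancel₀ (a_pos n).ne', ENNReal.ofReal_one, one_mul]

lemma cLΨ_pos : 0 < cLΨ := by
  rw [cLΨ]
  have hΨ : (0:ℝ≥0∞) < (L Ψ) ^ (1/2 : ℝ) :=
    ENNReal.rpow_pos (lt_of_lt_of_le zero_lt_one L_Ψ_ge_one) L_Ψ_ne_top
  have hF : (0:ℝ≥0∞) < (L (𝓕 Ψ)) ^ (1/2 : ℝ) :=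
    ENNReal.rpow_pos (pos_iff_ne_zero.2 L_fourierΨ_ne_zero) L_fourierΨ_ne_top
  exact ENNReal.mul_pos hΨ.ne' hF.ne'

lemma cLΨ_ne_top : cLΨ ≠ ⊤ := by
  rw [cLΨ]
  apply ENNReal.mul_ne_top
  · exact ENNReal.rpow_ne_top_of_nonneg (by norm_num) L_Ψ_ne_top
  · exact ENNReal.rpow_ne_top_of_nonneg (by norm_num) L_fourierΨ_ne_top

end DispAux

open DispAux in
/-- There is an infinite orthonormal sequence `{φₙ}_{n ∈ ℤ}` in `L²(ℝ)` and a constant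
`0 < c < ∞` with `μ(φₙ) = 0`, `μ(φ̂ₙ) = 0` and `Δ(φₙ)·Δ(φ̂ₙ) = c` for every `n`. -/
theorem exists_orthonormal_sequence_zero_means_const_dispersion_product :
    ∃ (φ : ℤ → ℝ → ℂ) (c : ℝ≥0∞), 0 < c ∧ c ≠ ⊤ ∧
      -- each `φₙ` lies in `L¹ ∩ L²` (so `𝓕 (φ n)` is its genuine Fourier transform)
      (∀ n, Integrable (φ n) (volume : Measure ℝ)) ∧
      (∀ n, MemLp (φ n) 2 (volume : Measure ℝ)) ∧
      -- orthonormality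
      (∀ n m, ∫ t, conj (φ n t) * φ m t = if n = m then (1 : ℂ) else 0) ∧
      -- zero time means and zero frequency means (both well defined)
      (∀ n, Integrable (fun t => t * ‖φ n t‖ ^ 2) (volume : Measure ℝ) ∧ timeMean (φ n) = 0) ∧
      (∀ n, Integrable (fun t => t * ‖𝓕 (φ n) t‖ ^ 2) (volume : Measure ℝ) ∧
        timeMean (𝓕 (φ n)) = 0) ∧
      -- constant product of dispersions
      (∀ n, timeDisp (φ n) * timeDisp (𝓕 (φ n)) = c) := by
  refine ⟨φf, cLΨ, cLΨ_pos, cLΨ_ne_top, φ_integrable, φ_memℒp, ?_, ?_, ?_, disp_product⟩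
  · intro n m
    by_cases h : n = m
    · subst h
      rw [if_pos rfl]
      exact φ_norm_one n
    · rw [if_neg h]
      have : ∀ t : ℝ, conj (φf n t) * φf m t = 0 := φ_orth h
      simp_rw [this]
      simp
  · intro n
    exact ⟨φ_time_integrable n, φ_timeMean n⟩
  · intro n
    refine ⟨?_, fourierφ_timeMean n⟩
    exact (fourier_decay_integrable (φ_smooth n) (φ_hcs n)).2.1

end
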